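/- arXiv:2211.03867 — 4 statements merged into one kernel-verified Lean document; each statement's English description precedes it below -/
import Mathlib

section
/- Every derivation of the Heisenberg Lie algebra 𝔥 has the form D(ζ,α) = (Aζ, ⟨η,ζ⟩ + (tr A)·α) for some A ∈ 𝔤𝔩(2) and η ∈ ℝ². -/
abbrev Hlie : Type := (ℝ × ℝ) × ℝ

noncomputable def theta (v : ℝ × ℝ) : ℝ × ℝ := (-v.2, v.1)

noncomputable def ip (v w : ℝ × ℝ) : ℝ := v.1 * w.1 + v.2 * w.2

noncomputable def br (X Y : Hlie) : Hlie := ((0, 0), ip X.1 (theta Y.1))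

/-- Every derivation of the Heisenberg Lie algebra has the block form
D(ζ,α) = (Aζ, ⟨η,ζ⟩ + (tr A)·α). -/
theorem heisenberg_derivation_form (D : Hlie →ₗ[ℝ] Hlie)
    (hD : ∀ X Y : Hlie, D (br X Y) = br (D X) Y + br X (D Y)) :
    ∃ a b c d η₁ η₂ : ℝ, ∀ (ζ : ℝ × ℝ) (α : ℝ),
      D (ζ, α) = ((a * ζ.1 + b * ζ.2, c * ζ.1 + d * ζ.2),
        η₁ * ζ.1 + η₂ * ζ.2 + (a + d) * α) := by
  set v1 := D (((1:ℝ),(0:ℝ)), (0:ℝ)) with hv1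
  set v2 := D (((0:ℝ),(1:ℝ)), (0:ℝ)) with hv2
  set v3 := D (((0:ℝ),(0:ℝ)), (1:ℝ)) with hv3
  have hz : D ((((0:ℝ),(0:ℝ)), (0:ℝ)) : Hlie) = 0 := by
    have : ((((0:ℝ),(0:ℝ)), (0:ℝ)) : Hlie) = 0 := rfl
    rw [this, map_zero]
  have h1 := hD (((1:ℝ),(0:ℝ)), (0:ℝ)) (((0:ℝ),(0:ℝ)), (1:ℝ))
  have h2 := hD (((0:ℝ),(1:ℝ)), (0:ℝ)) (((0:ℝ),(0:ℝ)), (1:ℝ))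
  have h3 := hD (((1:ℝ),(0:ℝ)), (0:ℝ)) (((0:ℝ),(1:ℝ)), (0:ℝ))
  simp only [br, ip, theta] at h1 h2 h3
  norm_num at h1 h2 h3
  -- extract second components
  have h1' := congrArg Prod.snd h1
  have h2' := congrArg Prod.snd h2
  have h3' := congrArg Prod.snd h3
  simp only [Prod.snd_add] at h1' h2' h3'
  refine ⟨v1.1.1, v2.1.1, v1.1.2, v2.1.2, v1.2, v2.2, ?_⟩
  intro ζ α
  have key : ((ζ, α) : Hlie)
      = ζ.1 • ((((1:ℝ),(0:ℝ)), (0:ℝ)) : Hlie) + ζ.2 • ((((0:ℝ),(1:ℝ)), (0:ℝ)) : Hlie)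
        + α • ((((0:ℝ),(0:ℝ)), (1:ℝ)) : Hlie) := by
    apply Prod.ext
    · apply Prod.ext <;> simp
    · simp
  rw [key, map_add, map_add, map_smul, map_smul, map_smul, ← hv1, ← hv2, ← hv3]
  have hA : v3.1.1 = 0 := by rw [hv3]; rw [hz, Prod.snd_zero] at h2'; exact h2'.symm
  have hB : v3.1.2 = 0 := by
    rw [hv3]; rw [hz, Prod.snd_zero] at h1'; exact neg_eq_zero.mp h1'.symm
  have hC : v3.2 = v1.1.1 + v2.1.2 := by
    have hneg : ((((0:ℝ),(0:ℝ)), (-1:ℝ)) : Hlie) = (-1:ℝ) • ((((0:ℝ),(0:ℝ)), (1:ℝ)) : Hlie) := by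
      apply Prod.ext
      · apply Prod.ext <;> simp
      · simp
    rw [hneg, map_smul] at h3'
    rw [hv1, hv2, hv3]
    simp only [Prod.smul_snd, smul_eq_mul] at h3'
    linarith [h3']
  refine Prod.ext (Prod.ext ?_ ?_) ?_ <;>
    simp [Prod.smul_fst, Prod.smul_snd, hA, hB, hC] <;> ring
end

section
/- If L is a 2-dimensional closed subgroup of the Heisenberg group H whose identity component is ℝe₁ × {0} × ℝ, then L = (ℝ × aℤ) × ℝ for some a ≥ 0. -/
abbrev H : Type := (ℝ × ℝ) × ℝ

noncomputable def hmul (g h : H) : H :=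
  (g.1 + h.1, g.2 + h.2 + (1 / 2) * ip g.1 (theta h.1))

/-- If L is a 2-dimensional closed subgroup of the Heisenberg group whose
identity component is ℝe₁ × {0} × ℝ, then L = (ℝ × aℤ) × ℝ for some a ≥ 0. -/
theorem closed_subgroup_dim_two (L : Set H)
    (h_one : (((0 : ℝ), (0 : ℝ)), (0 : ℝ)) ∈ L)
    (h_mul : ∀ g ∈ L, ∀ h ∈ L, hmul g h ∈ L)
    (h_inv : ∀ g ∈ L, ((-g.1.1, -g.1.2), -g.2) ∈ L)
    (h_closed : IsClosed L)
    (h_comp : connectedComponentIn L (((0 : ℝ), (0 : ℝ)), (0 : ℝ)) =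
      {g : H | g.1.2 = 0}) :
    ∃ a : ℝ, 0 ≤ a ∧ L = {g : H | ∃ n : ℤ, g.1.2 = a * n} := by
  -- every element with second coordinate 0 is in L
  have hL0 : ∀ g : H, g.1.2 = 0 → g ∈ L := by
    intro g hg
    have := connectedComponentIn_subset L ((((0 : ℝ), (0 : ℝ)), (0 : ℝ)) : H)
    rw [h_comp] at this
    exact this hg
  -- key characterization
  have key : ∀ g : H, g ∈ L ↔ (((0 : ℝ), g.1.2), (0 : ℝ)) ∈ L := by
    intro g
    constructor
    · intro hg
      have hk : (((-g.1.1, (0:ℝ)), -(g.2 + (1/2) * ip g.1 (theta (-g.1.1, 0)))) : H) ∈ L :=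
        hL0 _ rfl
      have := h_mul g hg _ hk
      have heq : hmul g ((-g.1.1, (0:ℝ)), -(g.2 + (1/2) * ip g.1 (theta (-g.1.1, 0))))
          = (((0 : ℝ), g.1.2), (0 : ℝ)) := by
        simp [hmul, ip, theta, Prod.ext_iff]
        try ring
      rwa [heq] at this
    · intro hg
      have hk : (((g.1.1, (0:ℝ)), g.2 - (1/2) * g.1.2 * g.1.1) : H) ∈ L := hL0 _ rfl
      have := h_mul _ hg _ hk
      have heq : hmul (((0 : ℝ), g.1.2), (0 : ℝ))
          ((g.1.1, (0:ℝ)), g.2 - (1/2) * g.1.2 * g.1.1) = g := by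
        simp [hmul, ip, theta, Prod.ext_iff]
        try ring
      rwa [heq] at this
  -- the projected subgroup of ℝ
  set S : AddSubgroup ℝ :=
    { carrier := {t : ℝ | (((0 : ℝ), t), (0 : ℝ)) ∈ L}
      zero_mem' := h_one
      add_mem' := by
        intro s t hs ht
        have := h_mul _ hs _ ht
        have heq : hmul (((0:ℝ), s), (0:ℝ)) (((0:ℝ), t), (0:ℝ))
            = (((0 : ℝ), s + t), (0 : ℝ)) := by
          simp [hmul, ip, theta, Prod.ext_iff]
        rwa [heq] at this
      neg_mem' := by
        intro t ht
        have := h_inv _ ht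
        simpa using this } with hS
  have hScl : IsClosed (S : Set ℝ) := by
    have : (S : Set ℝ) = (fun t : ℝ => ((((0 : ℝ), t), (0 : ℝ)) : H)) ⁻¹' L := rfl
    rw [this]
    exact h_closed.preimage (by fun_prop)
  have hLS : L = {g : H | g.1.2 ∈ S} := by
    ext g
    exact key g
  rcases AddSubgroup.dense_or_cyclic S with hd | ⟨a₀, ha₀⟩
  · -- dense case: S = ℝ, contradicting h_comp
    exfalso
    have hStop : (S : Set ℝ) = Set.univ := by rw [← hScl.closure_eq, hd.closure_eq]
    have hLuniv : L = Set.univ := by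
      rw [hLS]
      ext g
      simp [show g.1.2 ∈ S from by show g.1.2 ∈ (S : Set ℝ); rw [hStop]; trivial]
    have : ((((0:ℝ),(1:ℝ)),(0:ℝ)) : H) ∈ connectedComponentIn L (((0 : ℝ), (0 : ℝ)), (0 : ℝ)) := by
      rw [hLuniv, connectedComponentIn_univ]
      have : ConnectedSpace H := by infer_instance
      rw [PreconnectedSpace.connectedComponent_eq_univ]
      trivial
    rw [h_comp] at this
    simp at this
  · refine ⟨|a₀|, abs_nonneg _, ?_⟩
    rw [hLS]
    ext g
    simp only [Set.mem_setOf_eq, SetLike.mem_coe]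
    rw [ha₀, AddSubgroup.mem_closure_singleton]
    constructor
    · rintro ⟨n, hn⟩
      rcases abs_cases a₀ with ⟨h1, _⟩ | ⟨h1, _⟩
      · exact ⟨n, by rw [← hn, h1, zsmul_eq_mul]; ring⟩
      · exact ⟨-n, by rw [← hn, h1, zsmul_eq_mul]; push_cast; ring⟩
    · rintro ⟨n, hn⟩
      rcases abs_cases a₀ with ⟨h1, _⟩ | ⟨h1, _⟩
      · exact ⟨n, by rw [hn, h1, zsmul_eq_mul]; ring⟩
      · exact ⟨-n, by rw [hn, h1, zsmul_eq_mul]; push_cast; ring⟩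
end

section
/- If L is a closed subgroup of the Heisenberg group H with identity component L₀ = ℝe₁ × {0} (i.e., L₀ = {(t,0,0) : t ∈ ℝ}) and dim L = 1, then L = ℝe₁ × {0} × aℤ for some a ≥ 0; in particular (0,ℝ) ∩ L = {0} × aℤ. -/
/-- If L is a closed subgroup of the Heisenberg group with identity component
L₀ = ℝe₁ × {0} = {(t,0,0) : t ∈ ℝ}, then L = ℝe₁ × {0} × aℤ for some a ≥ 0; in
particular ({0} × ℝ) ∩ L = {0} × aℤ. -/
theorem closed_subgroup_dim_one (L : Set H)
    (h_one : (((0 : ℝ), (0 : ℝ)), (0 : ℝ)) ∈ L)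
    (h_mul : ∀ g ∈ L, ∀ h ∈ L, hmul g h ∈ L)
    (h_inv : ∀ g ∈ L, ((-g.1.1, -g.1.2), -g.2) ∈ L)
    (h_closed : IsClosed L)
    (h_comp : connectedComponentIn L (((0 : ℝ), (0 : ℝ)), (0 : ℝ)) =
      {g : H | g.1.2 = 0 ∧ g.2 = 0}) :
    ∃ a : ℝ, 0 ≤ a ∧
      L = {g : H | g.1.2 = 0 ∧ ∃ n : ℤ, g.2 = a * n} ∧
      {g : H | g.1 = 0} ∩ L = {g : H | g.1 = 0 ∧ ∃ n : ℤ, g.2 = a * n} := by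
  -- The identity component is contained in L
  have hL0 : {g : H | g.1.2 = 0 ∧ g.2 = 0} ⊆ L := by
    rw [← h_comp]; exact connectedComponentIn_subset L _
  have hline : ∀ t : ℝ, (((t : ℝ), (0 : ℝ)), (0 : ℝ)) ∈ L := fun t => hL0 ⟨rfl, rfl⟩
  -- the center line cannot be contained in L
  have hcenter_not : ¬ (∀ z : ℝ, (((0 : ℝ), (0 : ℝ)), z) ∈ L) := by
    intro hz
    have hconn : IsPreconnected ((fun z : ℝ => ((((0 : ℝ), (0 : ℝ)), z) : H)) '' Set.univ) := by
      apply isPreconnected_univ.image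
      exact (Continuous.prodMk_right _).continuousOn
    have hsub : (fun z : ℝ => ((((0 : ℝ), (0 : ℝ)), z) : H)) '' Set.univ ⊆ L := by
      rintro _ ⟨z, -, rfl⟩; exact hz z
    have hmem : ((((0 : ℝ), (0 : ℝ)), (0 : ℝ)) : H) ∈
        (fun z : ℝ => ((((0 : ℝ), (0 : ℝ)), z) : H)) '' Set.univ :=
      ⟨0, Set.mem_univ _, rfl⟩
    have := hconn.subset_connectedComponentIn hmem hsub
    rw [h_comp] at this
    have h1 : ((((0 : ℝ), (0 : ℝ)), (1 : ℝ)) : H) ∈ {g : H | g.1.2 = 0 ∧ g.2 = 0} :=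
      this ⟨1, Set.mem_univ _, rfl⟩
    exact one_ne_zero h1.2
  -- every element of L has vanishing second coordinate of the first factor
  have hy0 : ∀ g ∈ L, g.1.2 = 0 := by
    intro g hg
    by_contra hy
    apply hcenter_not
    intro z
    set t : ℝ := z / g.1.2 with ht
    have h1 : hmul g (((t, 0), 0) : H) ∈ L := h_mul g hg _ (hline t)
    have h2 : hmul (hmul g (((t, 0), 0) : H)) ((-g.1.1, -g.1.2), -g.2) ∈ L :=
      h_mul _ h1 _ (h_inv g hg)
    have h3 : hmul (hmul (hmul g (((t, 0), 0) : H)) ((-g.1.1, -g.1.2), -g.2))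
        (((-t, 0), 0) : H) ∈ L := by
      have h4 := h_inv _ (hline t)
      simp only [neg_zero] at h4
      exact h_mul _ h2 _ h4
    have heq : hmul (hmul (hmul g (((t, 0), 0) : H)) ((-g.1.1, -g.1.2), -g.2))
        (((-t, 0), 0) : H) = (((0 : ℝ), (0 : ℝ)), z) := by
      simp only [hmul, ip, theta, Prod.mk.injEq, Prod.ext_iff, Prod.fst_add, Prod.snd_add]
      refine ⟨⟨by ring, by ring⟩, ?_⟩
      rw [ht]
      field_simp
      ring
    rwa [heq] at h3
  -- the central subgroup
  set Z : AddSubgroup ℝ :=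
    { carrier := {z : ℝ | ((((0 : ℝ), (0 : ℝ)), z) : H) ∈ L}
      zero_mem' := h_one
      add_mem' := by
        intro a b ha hb
        have := h_mul _ ha _ hb
        simpa [hmul, ip, theta] using this
      neg_mem' := by
        intro a ha
        have := h_inv _ ha
        simpa using this } with hZ
  have hZclosed : IsClosed (Z : Set ℝ) := by
    have : (Z : Set ℝ) = (fun z : ℝ => ((((0 : ℝ), (0 : ℝ)), z) : H)) ⁻¹' L := rfl
    rw [this]
    exact h_closed.preimage (Continuous.prodMk_right _)
  rcases AddSubgroup.dense_or_cyclic Z with hdense | ⟨b, hb⟩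
  · exfalso
    apply hcenter_not
    intro z
    have : (Z : Set ℝ) = Set.univ := hZclosed.closure_eq ▸ hdense.closure_eq
    have hz : z ∈ (Z : Set ℝ) := this ▸ Set.mem_univ z
    exact hz
  · have hbmem : ∀ z : ℝ, z ∈ Z ↔ ∃ n : ℤ, z = |b| * n := by
      intro z
      rw [hb, AddSubgroup.mem_closure_singleton]
      constructor
      · rintro ⟨n, rfl⟩
        rcases abs_cases b with ⟨h, -⟩ | ⟨h, -⟩
        · exact ⟨n, by rw [h, zsmul_eq_mul]; push_cast; ring⟩
        · exact ⟨-n, by rw [h, zsmul_eq_mul]; push_cast; ring⟩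
      · rintro ⟨n, rfl⟩
        rcases abs_cases b with ⟨h, -⟩ | ⟨h, -⟩
        · exact ⟨n, by rw [h, zsmul_eq_mul]; push_cast; ring⟩
        · exact ⟨-n, by rw [h, zsmul_eq_mul]; push_cast; ring⟩
    have hLeq : L = {g : H | g.1.2 = 0 ∧ ∃ n : ℤ, g.2 = |b| * n} := by
      ext g
      constructor
      · intro hg
        have hy := hy0 g hg
        refine ⟨hy, ?_⟩
        have h1 : hmul (((- g.1.1, 0), 0) : H) g ∈ L := h_mul _ (hline _) _ hg
        have heq : hmul (((- g.1.1, 0), 0) : H) g = (((0 : ℝ), (0 : ℝ)), g.2) := by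
          simp only [hmul, ip, theta, Prod.ext_iff, Prod.fst_add, Prod.snd_add]
          refine ⟨⟨by ring, by rw [hy]; ring⟩, by rw [hy]; ring⟩
        rw [heq] at h1
        exact (hbmem g.2).mp h1
      · rintro ⟨hy, n, hn⟩
        have hzmem : ((((0 : ℝ), (0 : ℝ)), g.2) : H) ∈ L := (hbmem g.2).mpr ⟨n, hn⟩
        have h1 : hmul (((g.1.1, 0), 0) : H) ((((0 : ℝ), (0 : ℝ)), g.2) : H) ∈ L :=
          h_mul _ (hline _) _ hzmem
        have heq : hmul (((g.1.1, 0), 0) : H) ((((0 : ℝ), (0 : ℝ)), g.2) : H) = g := by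
          simp only [hmul, ip, theta, Prod.ext_iff, Prod.fst_add, Prod.snd_add]
          exact ⟨⟨by ring, by rw [hy]; ring⟩, by ring⟩
        rwa [heq] at h1
    refine ⟨|b|, abs_nonneg b, hLeq, ?_⟩
    ext g
    constructor
    · rintro ⟨hg1, hg2⟩
      rw [hLeq] at hg2
      exact ⟨hg1, hg2.2⟩
    · rintro ⟨hg1, n, hn⟩
      have hg1' : g.1 = ((0 : ℝ), (0 : ℝ)) := hg1
      refine ⟨hg1, ?_⟩
      rw [hLeq]
      exact ⟨by rw [hg1'], n, hn⟩
end

section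
/- If a,b,c > 0 and the set L = aℤ × bℤ × cℤ is a subgroup of the Heisenberg group H, then ab ∈ cℤ. -/
/-- If a,b,c > 0 and aℤ × bℤ × cℤ is a subgroup of the Heisenberg group,
then ab ∈ cℤ. -/
theorem lattice_subgroup_condition (a b c : ℝ)
    (ha : 0 < a) (hb : 0 < b) (hc : 0 < c)
    (L : Set H)
    (hL : L = {g : H | (∃ m : ℤ, g.1.1 = a * m) ∧ (∃ m : ℤ, g.1.2 = b * m) ∧
      ∃ m : ℤ, g.2 = c * m})
    (h_mul : ∀ g ∈ L, ∀ h ∈ L, hmul g h ∈ L)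
    (h_inv : ∀ g ∈ L, ((-g.1.1, -g.1.2), -g.2) ∈ L) :
    ∃ k : ℤ, a * b = c * k := by
  subst hL
  have hg : ((a, 0), (0:ℝ)) ∈ {g : H | (∃ m : ℤ, g.1.1 = a * m) ∧ (∃ m : ℤ, g.1.2 = b * m) ∧
      ∃ m : ℤ, g.2 = c * m} := by
    exact ⟨⟨1, by simp⟩, ⟨0, by simp⟩, ⟨0, by simp⟩⟩
  have hh : ((0, b), (0:ℝ)) ∈ {g : H | (∃ m : ℤ, g.1.1 = a * m) ∧ (∃ m : ℤ, g.1.2 = b * m) ∧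
      ∃ m : ℤ, g.2 = c * m} := by
    exact ⟨⟨0, by simp⟩, ⟨1, by simp⟩, ⟨0, by simp⟩⟩
  have h1 := h_mul _ hg _ hh
  have h2 := h_mul _ hh _ hg
  obtain ⟨-, -, m, hm⟩ := h1
  obtain ⟨-, -, n, hn⟩ := h2
  simp only [hmul, ip, theta] at hm hn
  norm_num at hm hn
  refine ⟨n - m, ?_⟩
  push_cast
  linarith
end
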